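/- Let g ≥ 2, let a, b be integers not both zero, set λ = √(a² + b²), and let Z be a symmetric (g − 2) × (g − 2) integer matrix all of whose eigenvalues lie in the interval [−λ, λ]. Let Y be the g × g block-diagonal integer matrix with blocks [[a, b], [b, −a]] and Z, and let A be the 2g × 2g block matrix [[I_g + Y², Y], [Y, I_g]]. Then A ∈ Sp(2g, ℤ), the larger root μ of X² − (λ² + 2)X + 1 is an eigenvalue of A whose multiplicity as a root of the characteristic polynomial of A is at least 2, and every complex eigenvalue α of A satisfies |α| ≤ μ. -/

import Mathlib

open Matrix Polynomial

section Helpers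

open Matrix Polynomial

variable {R : Type*} [CommRing R] {n m : Type*} [DecidableEq n] [Fintype n]
  [DecidableEq m] [Fintype m]

lemma my_charmatrix_diagonal (v : n → R) :
    charmatrix (diagonal v) = diagonal (fun i => (X : R[X]) - C (v i)) := by
  ext i j
  by_cases h : i = j
  · subst h; simp
  · simp [h, diagonal_apply_ne _ h]

lemma my_charpoly_diagonal (v : n → R) :
    (diagonal v).charpoly = ∏ i, ((X : R[X]) - C (v i)) := by
  rw [Matrix.charpoly, my_charmatrix_diagonal, det_diagonal]

lemma my_charpoly_fromBlocks_zero (M : Matrix m m R) (N : Matrix n n R) :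
    (fromBlocks M 0 0 N).charpoly = M.charpoly * N.charpoly := by
  rw [Matrix.charpoly, charmatrix_fromBlocks]
  simp only [Matrix.map_zero _ (map_zero _), neg_zero]
  rw [det_fromBlocks_zero₂₁]
  rfl

lemma my_charpoly_conj (U W M : Matrix n n R) (hUW : U * W = 1) (hWU : W * U = 1) :
    (U * M * W).charpoly = M.charpoly := by
  have hscalar : ∀ P : Matrix n n R[X], Matrix.scalar n (X : R[X]) * P = P * Matrix.scalar n X := by
    intro P; ext i j
    simp [Matrix.scalar_apply, Matrix.diagonal_mul, Matrix.mul_diagonal, mul_comm]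
  have key : charmatrix (U * M * W) = (U.map C) * charmatrix M * (W.map C) := by
    simp only [charmatrix, RingHom.mapMatrix_apply]
    rw [Matrix.mul_sub, Matrix.sub_mul]
    congr 1
    · have hUW' : (U.map ⇑(C : R →+* R[X])) * (W.map ⇑(C : R →+* R[X])) = 1 := by
        rw [← Matrix.map_mul, hUW, Matrix.map_one _ (map_zero _) (map_one _)]
      calc Matrix.scalar n (X : R[X])
          = Matrix.scalar n X * ((U.map ⇑(C : R →+* R[X])) * (W.map ⇑(C : R →+* R[X]))) := by
            rw [hUW', Matrix.mul_one]
        _ = (U.map ⇑(C : R →+* R[X])) * Matrix.scalar n X * (W.map ⇑(C : R →+* R[X])) := by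
            rw [← Matrix.mul_assoc, hscalar]
    · simp [Matrix.map_mul]
  rw [Matrix.charpoly, key, det_mul, det_mul, mul_comm, ← mul_assoc, ← det_mul, ← Matrix.map_mul,
    hWU, Matrix.map_one _ (map_zero _) (map_one _), det_one, one_mul]
  rfl

lemma my_det_fromBlocks_diagonal (w x y z : n → R) :
    det (fromBlocks (diagonal w) (diagonal x) (diagonal y) (diagonal z)) =
      ∏ i, (w i * z i - x i * y i) := by
  classical
  let e : n ⊕ n ≃ Fin 2 × n :=
    { toFun := Sum.elim (fun i => (0, i)) (fun i => (1, i))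
      invFun := fun p => if p.1 = 0 then Sum.inl p.2 else Sum.inr p.2
      left_inv := by rintro (i | i) <;> simp
      right_inv := by rintro ⟨a, i⟩; fin_cases a <;> simp }
  have h : fromBlocks (diagonal w) (diagonal x) (diagonal y) (diagonal z) =
      (blockDiagonal (fun i => !![w i, x i; y i, z i])).submatrix e e := by
    ext (i | i) (j | j) <;> by_cases h : i = j <;>
      simp [e, blockDiagonal_apply, diagonal_apply, h, eq_comm]
  rw [h, det_submatrix_equiv_self, det_blockDiagonal]
  congr 1
  ext i
  rw [det_fin_two_of]

lemma my_model_charpoly (d : n → R) :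
    (fromBlocks (1 + (diagonal d) ^ 2) (diagonal d) (diagonal d) (1 : Matrix n n R)).charpoly
      = ∏ i, ((X : R[X]) ^ 2 - C (d i ^ 2 + 2) * X + 1) := by
  have hD : (1 : Matrix n n R) + (diagonal d) ^ 2 = diagonal (fun i => 1 + d i ^ 2) := by
    rw [sq, diagonal_mul_diagonal, ← Matrix.diagonal_one, diagonal_add]
    simp [sq]
  have hc1 : charmatrix (1 : Matrix n n R) = diagonal (fun _ : n => (X : R[X]) - C 1) := by
    rw [← Matrix.diagonal_one, my_charmatrix_diagonal]
  have hmap : -((diagonal d).map ⇑(C : R →+* R[X])) = diagonal (fun i => -C (d i)) := by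
    rw [diagonal_map (map_zero _), ← diagonal_neg]
  rw [Matrix.charpoly, charmatrix_fromBlocks, hD, my_charmatrix_diagonal, hc1, hmap,
    my_det_fromBlocks_diagonal]
  refine Finset.prod_congr rfl fun i _ => ?_
  simp only [map_add, map_pow, map_ofNat, Polynomial.C_1]
  ring

lemma my_fromBlocks_conj (U P Q R' S W : Matrix n n R) :
    fromBlocks U 0 0 U * fromBlocks P Q R' S * fromBlocks W 0 0 W =
      fromBlocks (U * P * W) (U * Q * W) (U * R' * W) (U * S * W) := by
  simp [fromBlocks_multiply]

end Helpers

set_option maxHeartbeats 1000000 in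
/-- Let `g ≥ 2`, `a, b` integers not both zero, `λ = √(a² + b²)`, and `Z` a
symmetric `(g−2) × (g−2)` integer matrix all of whose eigenvalues lie in `[−λ, λ]`. Let `Y`
be the block-diagonal matrix with blocks `[[a, b], [b, −a]]` and `Z`, and
`A = [[I + Y², Y], [Y, I]]`. Then `A ∈ Sp(2g, ℤ)`, the larger root `μ` of
`X² − (λ² + 2)X + 1` is an eigenvalue of `A` of multiplicity at least `2` in the
characteristic polynomial of `A`, and every complex eigenvalue `α` of `A` satisfies
`|α| ≤ μ`. -/
theorem blockDiag_symplectic_leading_eigenvalue (g : ℕ) (hg : 2 ≤ g) (a b : ℤ)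
    (hab : ¬(a = 0 ∧ b = 0)) (Z : Matrix (Fin (g - 2)) (Fin (g - 2)) ℤ) (hZ : Z.IsSymm)
    (hZeig : ∀ t : ℝ, (Z.map (Int.cast : ℤ → ℝ)).charpoly.IsRoot t →
      t ∈ Set.Icc (-Real.sqrt ((a : ℝ) ^ 2 + (b : ℝ) ^ 2))
        (Real.sqrt ((a : ℝ) ^ 2 + (b : ℝ) ^ 2))) :
    ∀ Y : Matrix (Fin 2 ⊕ Fin (g - 2)) (Fin 2 ⊕ Fin (g - 2)) ℤ,
      Y = Matrix.fromBlocks !![a, b; b, -a] 0 0 Z →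
      ∀ A : Matrix ((Fin 2 ⊕ Fin (g - 2)) ⊕ (Fin 2 ⊕ Fin (g - 2)))
          ((Fin 2 ⊕ Fin (g - 2)) ⊕ (Fin 2 ⊕ Fin (g - 2))) ℤ,
        A = Matrix.fromBlocks (1 + Y ^ 2) Y Y 1 →
        ∀ μ : ℝ, μ = ((((a : ℝ) ^ 2 + (b : ℝ) ^ 2) + 2) +
            Real.sqrt (((((a : ℝ) ^ 2 + (b : ℝ) ^ 2) + 2)) ^ 2 - 4)) / 2 →
        Aᵀ * Matrix.fromBlocks 0 1 (-1) 0 * A = Matrix.fromBlocks 0 1 (-1) 0 ∧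
        2 ≤ Polynomial.rootMultiplicity (μ : ℂ) (A.map (Int.cast : ℤ → ℂ)).charpoly ∧
        ∀ α : ℂ, (A.map (Int.cast : ℤ → ℂ)).charpoly.IsRoot α → ‖α‖ ≤ μ := by
  intro Y hY A hA μ hμ
  -- symmetry facts
  have hBsymm : (!![a, b; b, -a])ᵀ = !![a, b; b, -a] := by
    ext i j
    fin_cases i <;> fin_cases j <;> rfl
  have hYsymm : Yᵀ = Y := by
    rw [hY]
    simp [fromBlocks_transpose, hBsymm, hZ.eq]
  refine ⟨?_, ?_⟩
  · -- symplectic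
    have hSsymm : (1 + Y ^ 2)ᵀ = 1 + Y ^ 2 := by
      rw [transpose_add, transpose_one, transpose_pow, hYsymm]
    rw [hA, fromBlocks_transpose, hSsymm, hYsymm, transpose_one, fromBlocks_multiply,
      fromBlocks_multiply]
    rw [fromBlocks_inj]
    exact ⟨by noncomm_ring, by noncomm_ring, by noncomm_ring, by noncomm_ring⟩
  -- spectral setup
  have habR : 0 < (a : ℝ) ^ 2 + (b : ℝ) ^ 2 := by
    rcases not_and_or.mp hab with h | h
    · have : (a : ℝ) ≠ 0 := Int.cast_ne_zero.mpr h
      positivity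
    · have : (b : ℝ) ≠ 0 := Int.cast_ne_zero.mpr h
      positivity
  set l : ℝ := Real.sqrt ((a : ℝ) ^ 2 + (b : ℝ) ^ 2) with hl
  have hl2 : l ^ 2 = (a : ℝ) ^ 2 + (b : ℝ) ^ 2 := Real.sq_sqrt habR.le
  have hlpos : 0 < l := Real.sqrt_pos.mpr habR
  set Yr := Y.map (Int.cast : ℤ → ℝ) with hYr
  have hYrsymm : Yrᵀ = Yr := by
    rw [hYr, ← Matrix.transpose_map, hYsymm]
  have hH : Yr.IsHermitian := by
    have h1 : Yrᴴ = Yrᵀ := by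
      ext i j
      simp [Matrix.conjTranspose_apply]
    exact h1.trans hYrsymm
  set d := hH.eigenvalues with hd
  set U : Matrix (Fin 2 ⊕ Fin (g - 2)) (Fin 2 ⊕ Fin (g - 2)) ℝ :=
    (hH.eigenvectorUnitary : Matrix (Fin 2 ⊕ Fin (g - 2)) (Fin 2 ⊕ Fin (g - 2)) ℝ) with hU
  have hU1 : U * star U = 1 := mem_unitaryGroup_iff.mp hH.eigenvectorUnitary.2
  have hU2 : star U * U = 1 := mem_unitaryGroup_iff'.mp hH.eigenvectorUnitary.2
  have hspec : Yr = U * diagonal d * star U := by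
    have h := hH.spectral_theorem
    rwa [RCLike.ofReal_real_eq_id, Function.id_comp] at h
  -- A over ℝ
  have hmapS : (1 + Y ^ 2).map (Int.cast : ℤ → ℝ) = 1 + Yr ^ 2 := by
    calc (1 + Y ^ 2).map (Int.cast : ℤ → ℝ)
        = (Int.castRingHom ℝ).mapMatrix (1 + Y ^ 2) := rfl
      _ = 1 + ((Int.castRingHom ℝ).mapMatrix Y) ^ 2 := by rw [map_add, _root_.map_one, map_pow]
      _ = 1 + Yr ^ 2 := rfl
  have hAr : A.map (Int.cast : ℤ → ℝ) = fromBlocks (1 + Yr ^ 2) Yr Yr 1 := by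
    rw [hA, fromBlocks_map, hmapS, Matrix.map_one _ Int.cast_zero Int.cast_one]
  -- conjugation
  have hYr2 : Yr ^ 2 = U * diagonal d ^ 2 * star U := by
    rw [hspec, sq]
    have h1 : U * diagonal d * star U * (U * diagonal d * star U)
        = U * diagonal d * (star U * U) * (diagonal d * star U) := by noncomm_ring
    rw [h1, hU2, Matrix.mul_one]
    noncomm_ring
  have hconj : fromBlocks (1 + Yr ^ 2) Yr Yr 1 =
      fromBlocks U 0 0 U * fromBlocks (1 + diagonal d ^ 2) (diagonal d) (diagonal d) 1 *
        fromBlocks (star U) 0 0 (star U) := by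
    rw [my_fromBlocks_conj, fromBlocks_inj]
    refine ⟨?_, hspec, hspec, ?_⟩
    · rw [Matrix.mul_add, Matrix.mul_one, Matrix.add_mul, hU1, hYr2]
    · rw [Matrix.mul_one, hU1]
  have hVW : fromBlocks U 0 0 U * fromBlocks (star U) 0 0 (star U) =
      (1 : Matrix ((Fin 2 ⊕ Fin (g - 2)) ⊕ (Fin 2 ⊕ Fin (g - 2)))
        ((Fin 2 ⊕ Fin (g - 2)) ⊕ (Fin 2 ⊕ Fin (g - 2))) ℝ) := by
    simp [fromBlocks_multiply, hU1, fromBlocks_one]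
  have hWV : fromBlocks (star U) 0 0 (star U) * fromBlocks U 0 0 U =
      (1 : Matrix ((Fin 2 ⊕ Fin (g - 2)) ⊕ (Fin 2 ⊕ Fin (g - 2)))
        ((Fin 2 ⊕ Fin (g - 2)) ⊕ (Fin 2 ⊕ Fin (g - 2))) ℝ) := by
    simp [fromBlocks_multiply, hU2, fromBlocks_one]
  have hcharR : (A.map (Int.cast : ℤ → ℝ)).charpoly
      = ∏ i, ((X : ℝ[X]) ^ 2 - C (d i ^ 2 + 2) * X + 1) := by
    rw [hAr, hconj, my_charpoly_conj _ _ _ hVW hWV, my_model_charpoly]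
  -- charpoly of Yr and its roots
  have hYrchar : Yr.charpoly = ∏ i, ((X : ℝ[X]) - C (d i)) := by
    rw [hspec, my_charpoly_conj _ _ _ hU1 hU2, my_charpoly_diagonal]
  have hBr : ((!![a, b; b, -a]).map (Int.cast : ℤ → ℝ))
      = !![(a : ℝ), (b : ℝ); (b : ℝ), -(a : ℝ)] := by
    ext i j
    fin_cases i <;> fin_cases j <;> simp [Matrix.map_apply]
  have hBrchar : (!![(a : ℝ), (b : ℝ); (b : ℝ), -(a : ℝ)]).charpoly
      = (X : ℝ[X]) ^ 2 - C ((a : ℝ) ^ 2 + (b : ℝ) ^ 2) := by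
    rw [Matrix.charpoly, det_fin_two]
    rw [charmatrix_apply_eq, charmatrix_apply_eq, charmatrix_apply_ne _ _ _ (by decide),
      charmatrix_apply_ne _ _ _ (by decide)]
    simp only [map_add, map_neg, map_pow]
    ring_nf
    simp [Matrix.cons_val_zero, Matrix.cons_val_one]
    ring
  have hZrblocks : Yr = fromBlocks (!![(a : ℝ), (b : ℝ); (b : ℝ), -(a : ℝ)]) 0 0
      (Z.map (Int.cast : ℤ → ℝ)) := by
    rw [hYr, hY, fromBlocks_map, hBr, Matrix.map_zero _ Int.cast_zero, Matrix.map_zero _ Int.cast_zero]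
  have hprod : ∏ i, ((X : ℝ[X]) - C (d i)) =
      ((X : ℝ[X]) ^ 2 - C ((a : ℝ) ^ 2 + (b : ℝ) ^ 2)) * (Z.map (Int.cast : ℤ → ℝ)).charpoly := by
    rw [← hYrchar, hZrblocks, my_charpoly_fromBlocks_zero, hBrchar]
  have hexists : ∀ x : ℝ, eval x (∏ i, ((X : ℝ[X]) - C (d i))) = 0 → ∃ i, d i = x := by
    intro x hx
    rw [eval_prod] at hx
    obtain ⟨i, -, hi⟩ := Finset.prod_eq_zero_iff.mp hx
    refine ⟨i, ?_⟩
    simp only [eval_sub, eval_X, eval_C] at hi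
    linarith [sub_eq_zero.mp hi]
  have hil : ∃ i, d i = l := by
    apply hexists
    rw [hprod, eval_mul]
    have : eval l ((X : ℝ[X]) ^ 2 - C ((a : ℝ) ^ 2 + (b : ℝ) ^ 2)) = 0 := by
      simp [hl2]
    rw [this, zero_mul]
  have hil' : ∃ i, d i = -l := by
    apply hexists
    rw [hprod, eval_mul]
    have : eval (-l) ((X : ℝ[X]) ^ 2 - C ((a : ℝ) ^ 2 + (b : ℝ) ^ 2)) = 0 := by
      simp [hl2]
    rw [this, zero_mul]
  obtain ⟨i₀, hi₀⟩ := hil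
  obtain ⟨i₁, hi₁⟩ := hil'
  have hne : i₀ ≠ i₁ := by
    intro h
    rw [h, hi₁] at hi₀
    linarith
  have hbound : ∀ k, d k ^ 2 ≤ (a : ℝ) ^ 2 + (b : ℝ) ^ 2 := by
    intro k
    have hk : eval (d k) (∏ i, ((X : ℝ[X]) - C (d i))) = 0 := by
      rw [eval_prod]
      exact Finset.prod_eq_zero (Finset.mem_univ k) (by simp)
    rw [hprod, eval_mul] at hk
    rcases mul_eq_zero.mp hk with h | h
    · simp only [eval_sub, eval_pow, eval_X, eval_C] at h
      linarith [sub_eq_zero.mp h]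
    · obtain ⟨h1, h2⟩ := hZeig (d k) h
      nlinarith
  -- complex charpoly
  have hmapC : A.map (Int.cast : ℤ → ℂ) = (A.map (Int.cast : ℤ → ℝ)).map (algebraMap ℝ ℂ) := by
    ext i j
    simp [Matrix.map_apply]
  have hcharC : (A.map (Int.cast : ℤ → ℂ)).charpoly
      = ∏ i, ((X : ℂ[X]) ^ 2 - C (((d i : ℝ) : ℂ) ^ 2 + 2) * X + 1) := by
    rw [hmapC, Matrix.charpoly_map, hcharR, Polynomial.map_prod]
    refine Finset.prod_congr rfl fun i _ => ?_
    simp only [Polynomial.map_add, Polynomial.map_sub, Polynomial.map_mul, Polynomial.map_pow,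
      Polynomial.map_one, Polynomial.map_X, Polynomial.map_C]
    simp only [Complex.coe_algebraMap]
    push_cast
    ring
  set s : ℝ := (a : ℝ) ^ 2 + (b : ℝ) ^ 2 + 2 with hs
  have hs2 : 2 ≤ s := by nlinarith
  have hu2 : Real.sqrt (s ^ 2 - 4) ^ 2 = s ^ 2 - 4 := Real.sq_sqrt (by nlinarith)
  have hu0 : 0 ≤ Real.sqrt (s ^ 2 - 4) := Real.sqrt_nonneg _
  have hμ2 : μ = (s + Real.sqrt (s ^ 2 - 4)) / 2 := hμ
  have hμid : μ ^ 2 - s * μ + 1 = 0 := by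
    rw [hμ2]
    linear_combination hu2 / 4
  have hqroot : ∀ k, d k ^ 2 = (a : ℝ) ^ 2 + (b : ℝ) ^ 2 →
      eval (μ : ℂ) ((X : ℂ[X]) ^ 2 - C (((d k : ℝ) : ℂ) ^ 2 + 2) * X + 1) = 0 := by
    intro k hk
    simp only [eval_add, eval_sub, eval_mul, eval_pow, eval_X, eval_C, eval_one]
    have h1 : (((d k : ℝ) : ℂ) ^ 2 + 2) = ((s : ℝ) : ℂ) := by
      have h2 : d k ^ 2 + 2 = s := by rw [hk, hs]
      calc (((d k : ℝ) : ℂ) ^ 2 + 2) = ((d k ^ 2 + 2 : ℝ) : ℂ) := by push_cast; ring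
        _ = ((s : ℝ) : ℂ) := by rw [h2]
    rw [h1]
    calc (μ : ℂ) ^ 2 - ((s : ℝ) : ℂ) * (μ : ℂ) + 1 = ((μ ^ 2 - s * μ + 1 : ℝ) : ℂ) := by
          push_cast; ring
      _ = 0 := by rw [hμid]; simp
  have hchar0 : (A.map (Int.cast : ℤ → ℂ)).charpoly ≠ 0 := (Matrix.charpoly_monic _).ne_zero
  refine ⟨?_, ?_⟩
  · -- multiplicity
    rw [le_rootMultiplicity_iff hchar0, hcharC]
    have h₀ : (X - C (μ : ℂ)) ∣ ((X : ℂ[X]) ^ 2 - C (((d i₀ : ℝ) : ℂ) ^ 2 + 2) * X + 1) :=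
      dvd_iff_isRoot.mpr (hqroot i₀ (by rw [hi₀, hl2]))
    have h₁ : (X - C (μ : ℂ)) ∣ ((X : ℂ[X]) ^ 2 - C (((d i₁ : ℝ) : ℂ) ^ 2 + 2) * X + 1) :=
      dvd_iff_isRoot.mpr (hqroot i₁ (by rw [hi₁, neg_sq]; exact hl2))
    rw [← Finset.mul_prod_erase _ _ (Finset.mem_univ i₀), sq]
    exact mul_dvd_mul h₀
      (h₁.trans (Finset.dvd_prod_of_mem _ (Finset.mem_erase.mpr ⟨hne.symm, Finset.mem_univ _⟩)))
  · -- bound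
    intro α hα
    rw [hcharC] at hα
    have hev : ∏ i, eval α ((X : ℂ[X]) ^ 2 - C (((d i : ℝ) : ℂ) ^ 2 + 2) * X + 1) = 0 := by
      rw [← eval_prod]; exact hα
    obtain ⟨k, -, hk⟩ := Finset.prod_eq_zero_iff.mp hev
    set c : ℝ := d k ^ 2 + 2 with hc
    have hc2 : 2 ≤ c := by nlinarith [sq_nonneg (d k)]
    have hcs : c ≤ s := by
      have := hbound k
      rw [hc, hs]
      linarith
    have hkq : α ^ 2 - (c : ℂ) * α + 1 = 0 := by
      simp only [eval_add, eval_sub, eval_mul, eval_pow, eval_X, eval_C, eval_one] at hk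
      have h1 : (((d k : ℝ) : ℂ) ^ 2 + 2) = ((c : ℝ) : ℂ) := by
        rw [hc]; push_cast; ring
      rw [h1] at hk
      exact hk
    set t : ℝ := Real.sqrt (c ^ 2 / 4 - 1) with htdef
    have ht2 : t ^ 2 = c ^ 2 / 4 - 1 := Real.sq_sqrt (by nlinarith)
    have ht0 : 0 ≤ t := Real.sqrt_nonneg _
    have htC : ((t : ℝ) : ℂ) ^ 2 = ((c : ℝ) : ℂ) ^ 2 / 4 - 1 := by
      calc ((t : ℝ) : ℂ) ^ 2 = ((t ^ 2 : ℝ) : ℂ) := by push_cast; ring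
        _ = ((c ^ 2 / 4 - 1 : ℝ) : ℂ) := by rw [ht2]
        _ = ((c : ℝ) : ℂ) ^ 2 / 4 - 1 := by push_cast; ring
    have hfac : (α - (c : ℂ) / 2 - (t : ℂ)) * (α - (c : ℂ) / 2 + (t : ℂ)) = 0 := by
      linear_combination hkq - htC
    have hct : (c / 2 - t) * (c / 2 + t) = 1 := by linear_combination -ht2
    rcases mul_eq_zero.mp hfac with h | h
    · have hα' : α = ((c / 2 + t : ℝ) : ℂ) := by push_cast; linear_combination h
      rw [hα', Complex.norm_real, Real.norm_eq_abs, abs_of_nonneg (by nlinarith), hμ2]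
      nlinarith [hu2, hu0, ht2, ht0, hc2, hcs, hs2]
    · have hα' : α = ((c / 2 - t : ℝ) : ℂ) := by push_cast; linear_combination h
      have h1 : 0 < c / 2 - t := by nlinarith [hct, ht0, hc2]
      rw [hα', Complex.norm_real, Real.norm_eq_abs, abs_of_nonneg h1.le, hμ2]
      linarith [ht0, hu0, hcs]
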